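/- Let U ⊆ ℝᵖ be open, let ν₁, …, νₙ be positive reals, let ψᵢ : U → ℝʳ be differentiable for i = 1, …, n, and let κ : U → ℝʳ be differentiable, such that for every θ ∈ U: νᵢ + ⟨κ(θ), ψᵢ(θ)⟩ > 0 for all i, and ∑ᵢ ψᵢ(θ) / (νᵢ + ⟨κ(θ), ψᵢ(θ)⟩) = 0 (equation (kappa)). Define ℓ(θ) = ∑ᵢ log νᵢ − ∑ᵢ log(νᵢ + ⟨κ(θ), ψᵢ(θ)⟩). Then for every θ ∈ U and every direction v ∈ ℝᵖ, the derivative of ℓ at θ in direction v equals −∑ᵢ ⟨κ(θ), Dψᵢ(θ)[v]⟩ / (νᵢ + ⟨κ(θ), ψᵢ(θ)⟩). Consequently, at any local maximizer θ̂ of ℓ in U, ∑ᵢ ⟨κ(θ̂), Dψᵢ(θ̂)[v]⟩ / (νᵢ + ⟨κ(θ̂), ψᵢ(θ̂)⟩) = 0 for all v (equation (deriv)). (Theorem 2: every maximum conditional empirical likelihood estimator satisfies the pair of estimating equations (kappa) and (deriv).) -/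

import Mathlib

open Finset Matrix

/-- Theorem 2: with `κ(θ)` defined by equation (kappa), the profiled conditional empirical
log-likelihood `ℓ` has directional derivative `−∑ᵢ ⟨κ(θ), Dψᵢ(θ)[v]⟩/(νᵢ + ⟨κ(θ), ψᵢ(θ)⟩)`,
and at any local maximiser this directional derivative vanishes (equation (deriv)). -/
theorem profile_loglik_deriv_and_stationarity
    {p r n : ℕ} (U : Set (Fin p → ℝ)) (hU : IsOpen U)
    (ν : Fin n → ℝ) (hν : ∀ i, 0 < ν i)
    (ψ : Fin n → (Fin p → ℝ) → (Fin r → ℝ))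
    (Dψ : Fin n → (Fin p → ℝ) → ((Fin p → ℝ) →L[ℝ] (Fin r → ℝ)))
    (hψ : ∀ i, ∀ θ ∈ U, HasFDerivAt (ψ i) (Dψ i θ) θ)
    (κ : (Fin p → ℝ) → (Fin r → ℝ))
    (Dκ : (Fin p → ℝ) → ((Fin p → ℝ) →L[ℝ] (Fin r → ℝ)))
    (hκ : ∀ θ ∈ U, HasFDerivAt κ (Dκ θ) θ)
    (hpos : ∀ θ ∈ U, ∀ i, 0 < ν i + κ θ ⬝ᵥ ψ i θ)
    (hkappa : ∀ θ ∈ U, ∑ i, (ν i + κ θ ⬝ᵥ ψ i θ)⁻¹ • ψ i θ = 0)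
    (ℓ : (Fin p → ℝ) → ℝ)
    (hℓ : ℓ = fun θ => ∑ i, Real.log (ν i) - ∑ i, Real.log (ν i + κ θ ⬝ᵥ ψ i θ)) :
    (∀ θ ∈ U, ∀ v : Fin p → ℝ,
        HasLineDerivAt ℝ ℓ
          (-∑ i, (κ θ ⬝ᵥ (Dψ i θ v)) / (ν i + κ θ ⬝ᵥ ψ i θ)) θ v) ∧
      (∀ θhat ∈ U, IsLocalMax ℓ θhat →
        ∀ v : Fin p → ℝ,
          ∑ i, (κ θhat ⬝ᵥ (Dψ i θhat v)) / (ν i + κ θhat ⬝ᵥ ψ i θhat) = 0) := by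
  have key : ∀ θ ∈ U, ∀ v : Fin p → ℝ,
      HasLineDerivAt ℝ ℓ (-∑ i, (κ θ ⬝ᵥ (Dψ i θ v)) / (ν i + κ θ ⬝ᵥ ψ i θ)) θ v := by
    intro θ hθ v
    have h0 : θ + (0:ℝ) • v = θ := by simp
    have hline : HasDerivAt (fun t : ℝ => θ + t • v) v 0 := by
      simpa using ((hasDerivAt_id (0:ℝ)).smul_const v).const_add θ
    have hκc : HasDerivAt (fun t : ℝ => κ (θ + t • v)) (Dκ θ v) 0 := by
      have h : HasFDerivAt κ (Dκ θ) (θ + (0:ℝ) • v) := by rw [h0]; exact hκ θ hθ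
      exact h.comp_hasDerivAt 0 hline
    have hψc : ∀ i, HasDerivAt (fun t : ℝ => ψ i (θ + t • v)) (Dψ i θ v) 0 := by
      intro i
      have h : HasFDerivAt (ψ i) (Dψ i θ) (θ + (0:ℝ) • v) := by rw [h0]; exact hψ i θ hθ
      exact h.comp_hasDerivAt 0 hline
    have hdot : ∀ i, HasDerivAt (fun t : ℝ => κ (θ + t • v) ⬝ᵥ ψ i (θ + t • v))
        (Dκ θ v ⬝ᵥ ψ i θ + κ θ ⬝ᵥ Dψ i θ v) 0 := by
      intro i
      have h := HasDerivAt.fun_sum (u := Finset.univ) fun (j : Fin r) _ =>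
        ((hasDerivAt_pi.1 hκc j).mul (hasDerivAt_pi.1 (hψc i) j))
      simp only [h0] at h
      have he : (Dκ θ) v ⬝ᵥ ψ i θ + κ θ ⬝ᵥ (Dψ i θ) v
          = ∑ j, ((Dκ θ) v j * ψ i θ j + κ θ j * (Dψ i θ) v j) := by
        simp [dotProduct, Finset.sum_add_distrib]
      rw [he]
      simpa [dotProduct] using h
    have hlog : ∀ i, HasDerivAt (fun t : ℝ => Real.log (ν i + κ (θ + t • v) ⬝ᵥ ψ i (θ + t • v)))
        ((Dκ θ v ⬝ᵥ ψ i θ + κ θ ⬝ᵥ Dψ i θ v) / (ν i + κ θ ⬝ᵥ ψ i θ)) 0 := by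
      intro i
      have hne : ν i + κ (θ + (0:ℝ) • v) ⬝ᵥ ψ i (θ + (0:ℝ) • v) ≠ 0 := by
        rw [h0]; exact (hpos θ hθ i).ne'
      have := (((hdot i).const_add (ν i)).log hne)
      simpa [h0] using this
    have hsum : HasDerivAt (fun t : ℝ => (∑ i, Real.log (ν i)) -
        ∑ i, Real.log (ν i + κ (θ + t • v) ⬝ᵥ ψ i (θ + t • v)))
        (-∑ i, (Dκ θ v ⬝ᵥ ψ i θ + κ θ ⬝ᵥ Dψ i θ v) / (ν i + κ θ ⬝ᵥ ψ i θ)) 0 := by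
      have := (HasDerivAt.fun_sum (u := Finset.univ) fun i _ => hlog i).const_sub
        (∑ i, Real.log (ν i))
      simpa using this
    have hzero : ∑ i, (Dκ θ v ⬝ᵥ ψ i θ) / (ν i + κ θ ⬝ᵥ ψ i θ) = 0 := by
      have h : Dκ θ v ⬝ᵥ (∑ i, (ν i + κ θ ⬝ᵥ ψ i θ)⁻¹ • ψ i θ) = 0 := by
        rw [hkappa θ hθ]; simp
      simp only [dotProduct, Finset.sum_apply, Pi.smul_apply, smul_eq_mul,
        Finset.mul_sum] at h ⊢
      rw [Finset.sum_comm] at h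
      rw [← h]
      apply Finset.sum_congr rfl
      intro i _
      rw [Finset.sum_div]
      apply Finset.sum_congr rfl
      intro j _
      ring
    have heq : -∑ i, (Dκ θ v ⬝ᵥ ψ i θ + κ θ ⬝ᵥ Dψ i θ v) / (ν i + κ θ ⬝ᵥ ψ i θ)
        = -∑ i, (κ θ ⬝ᵥ (Dψ i θ v)) / (ν i + κ θ ⬝ᵥ ψ i θ) := by
      rw [neg_inj]
      rw [show (∑ i, (Dκ θ v ⬝ᵥ ψ i θ + κ θ ⬝ᵥ Dψ i θ v) / (ν i + κ θ ⬝ᵥ ψ i θ))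
          = ∑ i, ((Dκ θ v ⬝ᵥ ψ i θ) / (ν i + κ θ ⬝ᵥ ψ i θ)
            + (κ θ ⬝ᵥ Dψ i θ v) / (ν i + κ θ ⬝ᵥ ψ i θ)) from
        Finset.sum_congr rfl (fun i _ => add_div _ _ _)]
      rw [Finset.sum_add_distrib, hzero, zero_add]
    rw [HasLineDerivAt, hℓ, ← heq]
    exact hsum
  refine ⟨key, ?_⟩
  intro θhat hθ hmax v
  have hld := key θhat hθ v
  have hmax' : IsLocalMax (fun t : ℝ => ℓ (θhat + t • v)) 0 := by
    have hcont : Continuous (fun t : ℝ => θhat + t • v) := by continuity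
    have htend : Filter.Tendsto (fun t : ℝ => θhat + t • v) (nhds 0) (nhds θhat) := by
      simpa using hcont.tendsto 0
    have := htend.eventually hmax
    simpa [IsLocalMax, IsMaxFilter] using this
  have := hmax'.hasDerivAt_eq_zero hld
  linarith [this]
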